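/- Let G = F∞ ⋊_β (ℤ ⋊_α ℤ₂) and H = ⟨F∞, ℤ₂⟩ as above. Then every element g ∈ G with g ≠ e has infinitely many H-conjugates. -/

import Mathlib

section helpers

variable {α : Type*} [DecidableEq α]

private lemma myReduceCons (x : α × Bool) (L : List (α × Bool))
    (hL : FreeGroup.reduce L = L) (h : ∀ y ∈ L.head?, x.1 ≠ y.1) :
    FreeGroup.reduce (x :: L) = x :: L := by
  rw [FreeGroup.reduce.cons, hL]
  cases L with
  | nil => rfl
  | cons hd tl =>
    have hx : x.1 ≠ hd.1 := h hd rfl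
    simp [hx]

private lemma fst_mem_of_mem_invRev {L : List (α × Bool)} {y : α × Bool}
    (h : y ∈ FreeGroup.invRev L) : y.1 ∈ L.map Prod.fst := by
  simp only [FreeGroup.invRev, List.mem_reverse, List.mem_map] at h
  obtain ⟨z, hz, hzy⟩ := h
  exact List.mem_map.mpr ⟨z, hz, by rw [← hzy]⟩

private lemma ofMulToWord (s : α) (w : FreeGroup α) (hs : s ∉ w.toWord.map Prod.fst) :
    (FreeGroup.of s * w).toWord = (s, true) :: w.toWord := by
  have h1 : FreeGroup.of s * w = FreeGroup.mk ((s, true) :: w.toWord) := by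
    conv_lhs => rw [← FreeGroup.mk_toWord (x := w)]
    rw [show FreeGroup.of s = FreeGroup.mk [(s, true)] from rfl, FreeGroup.mul_mk]
    rfl
  rw [h1, FreeGroup.toWord_mk]
  refine myReduceCons _ _ (FreeGroup.reduce_toWord w) (fun y hy => ?_)
  have hmem : y ∈ w.toWord := List.mem_of_mem_head? hy
  exact fun h => hs (by rw [show s = y.1 from h]; exact List.mem_map.mpr ⟨y, hmem, rfl⟩)

private lemma invMulToWord (s : α) (w : FreeGroup α) (hs : s ∉ w.toWord.map Prod.fst) :
    ((FreeGroup.of s)⁻¹ * w⁻¹).toWord = (s, false) :: FreeGroup.invRev w.toWord := by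
  have h1 : (FreeGroup.of s)⁻¹ * w⁻¹ =
      FreeGroup.mk ((s, false) :: FreeGroup.invRev w.toWord) := by
    conv_lhs => rw [← FreeGroup.mk_toWord (x := w)]
    rw [show FreeGroup.of s = FreeGroup.mk [(s, true)] from rfl, FreeGroup.inv_mk,
      FreeGroup.inv_mk, FreeGroup.mul_mk]
    rfl
  rw [h1, FreeGroup.toWord_mk]
  refine myReduceCons _ _ ?_ (fun y hy => ?_)
  · rw [FreeGroup.reduce_invRev, FreeGroup.reduce_toWord]
  · have hmem : y ∈ FreeGroup.invRev w.toWord := List.mem_of_mem_head? hy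
    exact fun h => hs (by rw [show s = y.1 from h]; exact fst_mem_of_mem_invRev hmem)

private lemma not_comm_of (s : α) (w : FreeGroup α) (hw : w ≠ 1)
    (hs : s ∉ w.toWord.map Prod.fst) : FreeGroup.of s * w ≠ w * FreeGroup.of s := by
  intro hc
  have hW : w.toWord ≠ [] := fun h => hw (FreeGroup.toWord_eq_nil_iff.mp h)
  have h1 := ofMulToWord s w hs
  have h2 : ((FreeGroup.of s * w)⁻¹).toWord = (s, false) :: FreeGroup.invRev w.toWord := by
    rw [hc, mul_inv_rev, invMulToWord s w hs]
  have h3 : ((FreeGroup.of s * w)⁻¹).toWord = FreeGroup.invRev w.toWord ++ [(s, false)] := by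
    rw [FreeGroup.toWord_inv, h1]
    simp [FreeGroup.invRev]
  rw [h2] at h3
  cases hV : FreeGroup.invRev w.toWord with
  | nil =>
    apply hW
    have := congrArg FreeGroup.invRev hV
    rwa [FreeGroup.invRev_invRev, FreeGroup.invRev_empty] at this
  | cons hd tl =>
    rw [hV] at h3
    simp only [List.cons_append, List.cons.injEq] at h3
    have hhd : (s, false) = hd := h3.1
    have hmem : hd ∈ FreeGroup.invRev w.toWord := hV ▸ List.mem_cons_self
    have := fst_mem_of_mem_invRev hmem
    rw [← hhd] at this
    exact hs this

private lemma lift_kill (s : α) (w : FreeGroup α) (hs : s ∉ w.toWord.map Prod.fst) :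
    FreeGroup.lift (fun u => if u = s then (1 : FreeGroup α) else FreeGroup.of u) w = w := by
  have hid : FreeGroup.lift FreeGroup.of w = w :=
    DFunLike.congr_fun
      (FreeGroup.ext_hom (FreeGroup.lift FreeGroup.of) (MonoidHom.id _) (by simp)) w
  conv_rhs => rw [← hid]
  rw [← FreeGroup.mk_toWord (x := w), FreeGroup.lift_mk, FreeGroup.lift_mk]
  congr 1
  refine List.map_congr_left (fun x hx => ?_)
  have hxs : x.1 ≠ s := fun h => hs (h ▸ List.mem_map.mpr ⟨x, hx, rfl⟩)
  simp [hxs]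

end helpers

/-- With `G = F∞ ⋊ (ℤ ⋊ ℤ₂)` and `H = ⟨F∞, ℤ₂⟩` as in Statement 13,
every `g ∈ G` with `g ≠ e` has infinitely many `H`-conjugates. -/
theorem infinitely_many_H_conjugates
    (sgn : Multiplicative (ZMod 2) →* MulAut (Multiplicative ℤ))
    (hsgn : ∀ (m : ZMod 2) (k : ℤ),
      sgn (Multiplicative.ofAdd m) (Multiplicative.ofAdd k) =
        Multiplicative.ofAdd ((-1 : ℤ) ^ m.val * k))
    (β : (Multiplicative ℤ ⋊[sgn] Multiplicative (ZMod 2)) →*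
        MulAut (FreeGroup (Multiplicative ℤ ⋊[sgn] Multiplicative (ZMod 2))))
    (hβ : ∀ s t : Multiplicative ℤ ⋊[sgn] Multiplicative (ZMod 2),
      β s (FreeGroup.of t) = FreeGroup.of (s * t))
    (H : Subgroup (FreeGroup (Multiplicative ℤ ⋊[sgn] Multiplicative (ZMod 2)) ⋊[β]
        (Multiplicative ℤ ⋊[sgn] Multiplicative (ZMod 2))))
    (hH : H = (SemidirectProduct.inl :
          FreeGroup (Multiplicative ℤ ⋊[sgn] Multiplicative (ZMod 2)) →* _).range ⊔
        ((SemidirectProduct.inr).comp (SemidirectProduct.inr :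
          Multiplicative (ZMod 2) →* Multiplicative ℤ ⋊[sgn] Multiplicative (ZMod 2))).range) :
    ∀ g : FreeGroup (Multiplicative ℤ ⋊[sgn] Multiplicative (ZMod 2)) ⋊[β]
        (Multiplicative ℤ ⋊[sgn] Multiplicative (ZMod 2)),
      g ≠ 1 → {x | ∃ h ∈ H, x = h * g * h⁻¹}.Infinite := by
  classical
  intro g hg
  by_cases hq : g.right = 1
  · -- g lies in the free group part
    have hgeq : g = SemidirectProduct.inl g.left := by
      conv_lhs => rw [← SemidirectProduct.inl_left_mul_inr_right g]
      rw [hq, map_one, mul_one]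
    have hw : g.left ≠ 1 := by
      intro h
      exact hg (by rw [hgeq, h, map_one])
    set w := g.left with hwdef
    set ι : ℤ → (Multiplicative ℤ ⋊[sgn] Multiplicative (ZMod 2)) :=
      fun k => SemidirectProduct.inl (Multiplicative.ofAdd k) with hιdef
    have hι : Function.Injective ι := fun a b h =>
      Multiplicative.ofAdd.injective (SemidirectProduct.inl_injective h)
    have hBfin : {k : ℤ | ι k ∈ w.toWord.map Prod.fst}.Finite :=
      (w.toWord.map Prod.fst).finite_toSet.preimage hι.injOn
    refine Set.infinite_of_injOn_mapsTo
      (f := fun k => SemidirectProduct.inl (φ := β)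
        (FreeGroup.of (ι k) * w * (FreeGroup.of (ι k))⁻¹)) ?_ ?_ hBfin.infinite_compl
    · intro k hk l hl he
      by_contra hkl
      simp only at he
      have he' : FreeGroup.of (ι k) * w * (FreeGroup.of (ι k))⁻¹ =
          FreeGroup.of (ι l) * w * (FreeGroup.of (ι l))⁻¹ :=
        SemidirectProduct.inl_injective he
      have hkl' : ι k ≠ ι l := fun h => hkl (hι h)
      set r := FreeGroup.lift (fun u => if u = ι k then
        (1 : FreeGroup (Multiplicative ℤ ⋊[sgn] Multiplicative (ZMod 2)))
        else FreeGroup.of u) with hrdef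
      have hrw : r w = w := lift_kill _ _ hk
      have hra : r (FreeGroup.of (ι k)) = 1 := by rw [hrdef, FreeGroup.lift_apply_of, if_pos rfl]
      have hrb : r (FreeGroup.of (ι l)) = FreeGroup.of (ι l) := by
        rw [hrdef, FreeGroup.lift_apply_of, if_neg (fun h => hkl' h.symm)]
      have hcon := congrArg r he'
      rw [map_mul, map_mul, map_inv, map_mul, map_mul, map_inv,
        hra, hrw, hrb, one_mul, inv_one, mul_one] at hcon
      -- hcon : w = of (ι l) * w * (of (ι l))⁻¹
      have hcomm : FreeGroup.of (ι l) * w = w * FreeGroup.of (ι l) := by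
        conv_rhs => rw [hcon]
        group
      exact not_comm_of (ι l) w hw hl hcomm
    · intro k _
      refine ⟨SemidirectProduct.inl (FreeGroup.of (ι k)), ?_, ?_⟩
      · rw [hH]; exact Subgroup.mem_sup_left ⟨_, rfl⟩
      · rw [hgeq]
        simp [map_mul, map_inv, ← hwdef]
  · -- g has nontrivial ℤ ⋊ ℤ₂ part
    set χ := FreeGroup.lift (fun u : Multiplicative ℤ ⋊[sgn] Multiplicative (ZMod 2) =>
      if u = 1 then Multiplicative.ofAdd (1 : ℤ) else (1 : Multiplicative ℤ)) with hχdef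
    have hofAdd : ∀ k : ℤ, Multiplicative.ofAdd (1 : ℤ) ^ k = Multiplicative.ofAdd k := by
      intro k
      rw [← ofAdd_zsmul, smul_eq_mul, mul_one]
    have key : ∀ v : FreeGroup (Multiplicative ℤ ⋊[sgn] Multiplicative (ZMod 2)),
        (SemidirectProduct.inl v * g * (SemidirectProduct.inl v)⁻¹).left =
          v * g.left * β g.right v⁻¹ := by
      intro v
      rw [← map_inv]
      rw [SemidirectProduct.mul_left, SemidirectProduct.mul_left,
        SemidirectProduct.mul_right, SemidirectProduct.left_inl,
        SemidirectProduct.right_inl, SemidirectProduct.left_inl]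
      simp
    have hχcalc : ∀ k : ℤ,
        χ ((SemidirectProduct.inl (FreeGroup.of (1 : Multiplicative ℤ ⋊[sgn]
            Multiplicative (ZMod 2)) ^ k) * g *
          (SemidirectProduct.inl (FreeGroup.of 1 ^ k))⁻¹).left) =
          Multiplicative.ofAdd k * χ g.left := by
      intro k
      rw [key]
      have hb : β g.right ((FreeGroup.of (1 : Multiplicative ℤ ⋊[sgn]
          Multiplicative (ZMod 2)) ^ k)⁻¹) = FreeGroup.of g.right ^ (-k) := by
        rw [← zpow_neg, map_zpow, hβ, mul_one]
      rw [map_mul, map_mul, hb, map_zpow, map_zpow, hχdef, FreeGroup.lift_apply_of,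
        FreeGroup.lift_apply_of, if_pos rfl, if_neg hq, one_zpow, mul_one, hofAdd]
    refine Set.infinite_of_injective_forall_mem
      (f := fun k : ℤ => SemidirectProduct.inl (FreeGroup.of (1 : Multiplicative ℤ ⋊[sgn]
        Multiplicative (ZMod 2)) ^ k) * g *
        (SemidirectProduct.inl (FreeGroup.of 1 ^ k))⁻¹) ?_ ?_
    · intro k l h
      have h2 := congrArg SemidirectProduct.left h
      rw [hχdef] at hχcalc
      have h3 := (hχcalc k).symm.trans ((congrArg _ h2).trans (hχcalc l))
      have h4 : Multiplicative.ofAdd k = Multiplicative.ofAdd l := mul_right_cancel h3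
      exact Multiplicative.ofAdd.injective h4
    · intro k
      exact ⟨SemidirectProduct.inl (FreeGroup.of 1 ^ k),
        by rw [hH]; exact Subgroup.mem_sup_left ⟨_, rfl⟩, rfl⟩
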